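/- arXiv:math/0509211 — 2 statements merged into one kernel-verified Lean document; each statement's English description precedes it below -/
import Mathlib

section
/- Define F_n ∈ ℝ[x] by F_0 = 1, F_1 = x, F_n = 2(2−x)F_{n−1} − F_{n−2}. For each k ≥ 3, the equation F_k(x) = 1 has a unique solution x_k in the open interval (0,1). -/
open Polynomial

noncomputable def F : ℕ → Polynomial ℝ
  | 0 => 1
  | 1 => X
  | (n + 2) => 2 * (2 - X) * F (n + 1) - F n

lemma evalF (n : ℕ) (s : ℝ) :
    (F n).eval (2 - Real.cosh (2*s)) * Real.sinh (2*s)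
      = Real.cosh (2*n*s) * Real.sinh (2*s)
        - 2*(Real.cosh (2*s) - 1) * Real.sinh (2*n*s) := by
  induction n using Nat.twoStepInduction with
  | zero => simp [F]
  | one => simp [F]; ring
  | more n ih1 ih2 =>
      have e1 : (2*((n:ℝ)+2)*s) = (2*((n:ℝ)+1)*s) + 2*s := by ring
      have e2 : (2*(n:ℝ)*s) = (2*((n:ℝ)+1)*s) - 2*s := by ring
      show (2 * (2 - X) * F (n+1) - F n).eval (2 - Real.cosh (2*s)) * Real.sinh (2*s) = _
      push_cast at ih1 ih2 ⊢
      rw [e2] at ih1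
      rw [e1]
      rw [Real.cosh_add, Real.sinh_add]
      rw [Real.cosh_sub, Real.sinh_sub] at ih1
      simp only [eval_mul, eval_sub, eval_ofNat, eval_X, eval_one]
      linear_combination (2*Real.cosh (2*s))*ih2 - ih1

lemma identB (m s : ℝ) :
    Real.cosh (2*m*s) * Real.sinh (2*s) - 2*(Real.cosh (2*s) - 1) * Real.sinh (2*m*s)
      - Real.sinh (2*s)
    = 2 * Real.sinh (m*s) * Real.sinh s * (3 * Real.sinh ((m-1)*s) - Real.sinh ((m+1)*s)) := by
  rw [show 2*m*s = m*s + m*s from by ring, show 2*s = s + s from by ring,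
    show (m-1)*s = m*s - s from by ring, show (m+1)*s = m*s + s from by ring,
    Real.cosh_add, Real.sinh_add, Real.cosh_add, Real.sinh_add, Real.sinh_add, Real.sinh_sub]
  linear_combination (-4*Real.sinh (m*s)*Real.cosh (m*s)) * Real.cosh_sq s
    + (2*Real.sinh s*Real.cosh s) * Real.cosh_sq (m*s)

lemma sinh_superadd (n : ℕ) (hn : 2 ≤ n) {u : ℝ} (hu : 0 < u) :
    (n:ℝ) * Real.sinh u < Real.sinh ((n:ℝ)*u) := by
  induction n, hn using Nat.le_induction with
  | base =>
      rw [show ((2:ℕ):ℝ)*u = u + u from by push_cast; ring, Real.sinh_add]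
      have h1 : 1 < Real.cosh u := Real.one_lt_cosh.mpr hu.ne'
      have h2 : 0 < Real.sinh u := Real.sinh_pos_iff.mpr hu
      push_cast
      nlinarith
  | succ n hn ih =>
      have h1 : 1 < Real.cosh u := Real.one_lt_cosh.mpr hu.ne'
      have h2 : 0 < Real.sinh u := Real.sinh_pos_iff.mpr hu
      have h3 : 0 < Real.sinh ((n:ℝ)*u) := Real.sinh_pos_iff.mpr (by positivity)
      have h4 : 1 < Real.cosh ((n:ℝ)*u) :=
        Real.one_lt_cosh.mpr (by positivity)
      push_cast
      rw [show ((n:ℝ)+1)*u = (n:ℝ)*u + u from by ring, Real.sinh_add]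
      nlinarith

lemma ratio_mono (k : ℕ) (hk : 3 ≤ k) :
    StrictMonoOn (fun s => Real.sinh (((k:ℝ)+1)*s) / Real.sinh (((k:ℝ)-1)*s))
      (Set.Ioi (0:ℝ)) := by
  have hk3 : (3:ℝ) ≤ (k:ℝ) := by exact_mod_cast hk
  apply strictMonoOn_of_deriv_pos (convex_Ioi 0)
  · apply ContinuousOn.div
    · exact (Real.continuous_sinh.comp (continuous_const.mul continuous_id)).continuousOn
    · exact (Real.continuous_sinh.comp (continuous_const.mul continuous_id)).continuousOn
    · intro x hx
      exact (Real.sinh_pos_iff.mpr (by simp at hx; nlinarith)).ne'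
  · intro s hs
    rw [interior_Ioi] at hs
    have hs0 : (0:ℝ) < s := hs
    have ha : 0 < Real.sinh (((k:ℝ)-1)*s) := Real.sinh_pos_iff.mpr (by nlinarith)
    have hb : HasDerivAt (fun s : ℝ => Real.sinh (((k:ℝ)+1)*s))
        (Real.cosh (((k:ℝ)+1)*s) * ((k:ℝ)+1)) s :=
      (Real.hasDerivAt_sinh _).comp s (by simpa using (hasDerivAt_id s).const_mul ((k:ℝ)+1))
    have hc : HasDerivAt (fun s : ℝ => Real.sinh (((k:ℝ)-1)*s))
        (Real.cosh (((k:ℝ)-1)*s) * ((k:ℝ)-1)) s :=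
      (Real.hasDerivAt_sinh _).comp s (by simpa using (hasDerivAt_id s).const_mul ((k:ℝ)-1))
    have hd := (hb.div hc ha.ne')
    rw [show deriv (fun s => Real.sinh (((k:ℝ)+1)*s) / Real.sinh (((k:ℝ)-1)*s)) s = _ from hd.deriv]
    apply div_pos
    · have e1 : Real.cosh (((k:ℝ)+1)*s) * ((k:ℝ)+1) * Real.sinh (((k:ℝ)-1)*s)
            - Real.sinh (((k:ℝ)+1)*s) * (Real.cosh (((k:ℝ)-1)*s) * ((k:ℝ)-1))
          = Real.sinh ((k:ℝ)*(2*s)) - (k:ℝ) * Real.sinh (2*s) := by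
        rw [show (k:ℝ)*(2*s) = ((k:ℝ)+1)*s + ((k:ℝ)-1)*s from by ring,
          show (2:ℝ)*s = ((k:ℝ)+1)*s - ((k:ℝ)-1)*s from by ring,
          Real.sinh_add, Real.sinh_sub]
        nlinarith [Real.cosh_sq (((k:ℝ)+1)*s), Real.cosh_sq (((k:ℝ)-1)*s)]
      rw [e1]
      have := sinh_superadd k (by omega) (u := 2*s) (by linarith)
      linarith
    · positivity

set_option maxHeartbeats 1000000 in
theorem F_k_eq_one_unique_root (k : ℕ) (hk : 3 ≤ k) :
    ∃! x : ℝ, x ∈ Set.Ioo (0 : ℝ) 1 ∧ (F k).eval x = 1 := by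
  have hk3 : (3:ℝ) ≤ (k:ℝ) := by exact_mod_cast hk
  -- the key equivalence
  have keyIff : ∀ s : ℝ, 0 < s →
      ((F k).eval (2 - Real.cosh (2*s)) = 1 ↔
        Real.sinh (((k:ℝ)+1)*s) = 3 * Real.sinh (((k:ℝ)-1)*s)) := by
    intro s hs
    have h2s : 0 < Real.sinh (2*s) := Real.sinh_pos_iff.mpr (by linarith)
    have hks : 0 < Real.sinh ((k:ℝ)*s) := Real.sinh_pos_iff.mpr (by nlinarith)
    have hss : 0 < Real.sinh s := Real.sinh_pos_iff.mpr hs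
    have key : ((F k).eval (2 - Real.cosh (2*s)) - 1) * Real.sinh (2*s)
        = 2 * Real.sinh ((k:ℝ)*s) * Real.sinh s
            * (3 * Real.sinh (((k:ℝ)-1)*s) - Real.sinh (((k:ℝ)+1)*s)) := by
      linear_combination (evalF k s) + (identB (k:ℝ) s)
    constructor
    · intro he
      rw [he] at key
      simp only [sub_self, zero_mul] at key
      have hc : (0:ℝ) < 2 * Real.sinh ((k:ℝ)*s) * Real.sinh s := by positivity
      have h0 : 3 * Real.sinh (((k:ℝ)-1)*s) - Real.sinh (((k:ℝ)+1)*s) = 0 :=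
        (mul_eq_zero.mp key.symm).resolve_left hc.ne'
      linarith
    · intro he
      have h0 : ((F k).eval (2 - Real.cosh (2*s)) - 1) * Real.sinh (2*s) = 0 := by
        rw [key, he]; ring
      have := (mul_eq_zero.mp h0).resolve_right h2s.ne'
      linarith
  -- a point T with cosh T = 2
  have hcosh2 : (2:ℝ) < Real.cosh 2 := by
    rw [Real.cosh_eq]
    have h1 := Real.exp_one_gt_d9
    have h2 : Real.exp 1 * Real.exp 1 = Real.exp 2 := by
      rw [← Real.exp_add]; norm_num
    nlinarith [Real.exp_pos (-2:ℝ)]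
  obtain ⟨T, hT, hTc⟩ := intermediate_value_Ioo (by norm_num : (0:ℝ) ≤ 2)
    Real.continuous_cosh.continuousOn
    (by rw [Real.cosh_zero]; exact ⟨one_lt_two, hcosh2⟩ :
      (2:ℝ) ∈ Set.Ioo (Real.cosh 0) (Real.cosh 2))
  have hT0 : (0:ℝ) < T := hT.1
  -- sinh T > 1
  have hsT : 1 < Real.sinh T := by
    have h1 : 0 < Real.sinh T := Real.sinh_pos_iff.mpr hT0
    nlinarith [Real.cosh_sq T]
  -- cosh (1/2) < 3/2
  have hch : Real.cosh (1/2 : ℝ) < 3/2 := by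
    rw [Real.cosh_eq]
    have h1 := Real.exp_one_lt_d9
    have h2 : Real.exp (1/2:ℝ) * Real.exp (1/2:ℝ) = Real.exp 1 := by
      rw [← Real.exp_add]; norm_num
    have h4 : Real.exp (-(1/2):ℝ) * Real.exp (1/2:ℝ) = 1 := by
      rw [← Real.exp_add]; norm_num
    have h5 : (1/2:ℝ) + 1 ≤ Real.exp (1/2:ℝ) := Real.add_one_le_exp _
    nlinarith [Real.exp_pos (-(1/2):ℝ), Real.exp_pos (1/2:ℝ)]
  -- T > 1/2
  have hT12 : (1/2:ℝ) < T := by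
    have := Real.cosh_lt_cosh.mp (by rw [hTc]; linarith : Real.cosh (1/2:ℝ) < Real.cosh T)
    rw [abs_of_pos (by norm_num : (0:ℝ) < 1/2), abs_of_pos hT0] at this
    exact this
  -- lower endpoint s₀
  set s₀ : ℝ := 1/(2*((k:ℝ)-1)) with hs₀def
  have hk1 : (0:ℝ) < (k:ℝ) - 1 := by linarith
  have hs₀pos : 0 < s₀ := by rw [hs₀def]; positivity
  have heas : ((k:ℝ)-1) * s₀ = 1/2 := by
    rw [hs₀def]
    field_simp
  have hs₀T : s₀ < T/2 := by
    have : s₀ ≤ 1/4 := by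
      rw [hs₀def]
      rw [div_le_div_iff₀ (by linarith) (by norm_num)]
      linarith
    linarith
  -- value of g at s₀ : sinh(b s₀) < 3 sinh(a s₀)
  have hgs₀ : Real.sinh (((k:ℝ)+1)*s₀) < 3 * Real.sinh (((k:ℝ)-1)*s₀) := by
    have hle : ((k:ℝ)+1)*s₀ ≤ 2*(((k:ℝ)-1)*s₀) := by nlinarith
    have h1 : Real.sinh (((k:ℝ)+1)*s₀) ≤ Real.sinh (2*(((k:ℝ)-1)*s₀)) :=
      Real.sinh_le_sinh.mpr hle
    rw [Real.sinh_two_mul, heas] at h1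
    have h2 : 0 < Real.sinh (1/2:ℝ) := Real.sinh_pos_iff.mpr (by norm_num)
    rw [heas]
    nlinarith
  -- value of g at T/2 : sinh(b T/2) > 3 sinh(a T/2)
  have hgT : 3 * Real.sinh (((k:ℝ)-1)*(T/2)) < Real.sinh (((k:ℝ)+1)*(T/2)) := by
    rw [show ((k:ℝ)+1)*(T/2) = ((k:ℝ)-1)*(T/2) + T from by ring, Real.sinh_add, hTc]
    have h1 : Real.sinh (((k:ℝ)-1)*(T/2)) < Real.cosh (((k:ℝ)-1)*(T/2)) :=
      Real.sinh_lt_cosh _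
    have h2 : 0 < Real.sinh (((k:ℝ)-1)*(T/2)) := Real.sinh_pos_iff.mpr (by nlinarith)
    have h3 : 0 < Real.cosh (((k:ℝ)-1)*(T/2)) := Real.cosh_pos _
    nlinarith
  -- IVT to find the root s₁
  obtain ⟨s₁, hs₁mem, hfs₁⟩ := intermediate_value_Ioo hs₀T.le
    (Continuous.continuousOn (by fun_prop :
      Continuous (fun s : ℝ => Real.sinh (((k:ℝ)+1)*s) - 3*Real.sinh (((k:ℝ)-1)*s))))
    (Set.mem_Ioo.mpr ⟨by linarith, by linarith⟩ :
      (0:ℝ) ∈ Set.Ioo (Real.sinh (((k:ℝ)+1)*s₀) - 3*Real.sinh (((k:ℝ)-1)*s₀))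
        (Real.sinh (((k:ℝ)+1)*(T/2)) - 3*Real.sinh (((k:ℝ)-1)*(T/2))))
  have hs₁pos : 0 < s₁ := lt_trans hs₀pos hs₁mem.1
  have hs₁eq : Real.sinh (((k:ℝ)+1)*s₁) = 3 * Real.sinh (((k:ℝ)-1)*s₁) := by
    have := hfs₁; simp only at this; linarith
  -- the root x
  refine ⟨2 - Real.cosh (2*s₁), ⟨⟨?_, ?_⟩, (keyIff s₁ hs₁pos).mpr hs₁eq⟩, ?_⟩
  · have h2s₁T : 2*s₁ < T := by
      have := hs₁mem.2; linarith
    have : Real.cosh (2*s₁) < Real.cosh T := by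
      apply Real.cosh_lt_cosh.mpr
      rw [abs_of_pos (by linarith), abs_of_pos hT0]
      exact h2s₁T
    rw [hTc] at this
    linarith
  · have : 1 < Real.cosh (2*s₁) := Real.one_lt_cosh.mpr (by positivity)
    linarith
  -- uniqueness
  · rintro y ⟨⟨hy0, hy1⟩, hFy⟩
    obtain ⟨t, ht, htc⟩ := intermediate_value_Ioo hT0.le
      Real.continuous_cosh.continuousOn
      (by rw [Real.cosh_zero, hTc]; exact ⟨by linarith, by linarith⟩ :
        (2 - y) ∈ Set.Ioo (Real.cosh 0) (Real.cosh T))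
    have htpos : 0 < t/2 := by linarith [ht.1]
    have hyx : y = 2 - Real.cosh (2*(t/2)) := by
      rw [show 2*(t/2) = t from by ring, htc]; ring
    have hyeq : Real.sinh (((k:ℝ)+1)*(t/2)) = 3 * Real.sinh (((k:ℝ)-1)*(t/2)) :=
      (keyIff (t/2) htpos).mp (by rw [← hyx]; exact hFy)
    have hmono := ratio_mono k hk
    have hratio : ∀ s : ℝ, 0 < s →
        Real.sinh (((k:ℝ)+1)*s) = 3 * Real.sinh (((k:ℝ)-1)*s) →
        Real.sinh (((k:ℝ)+1)*s) / Real.sinh (((k:ℝ)-1)*s) = 3 := by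
      intro s hs he
      have h2 : 0 < Real.sinh (((k:ℝ)-1)*s) := Real.sinh_pos_iff.mpr (by nlinarith)
      rw [he]; field_simp
    have heq : t/2 = s₁ := by
      apply hmono.injOn (Set.mem_Ioi.mpr htpos) (Set.mem_Ioi.mpr hs₁pos)
      simp only
      rw [hratio (t/2) htpos hyeq, hratio s₁ hs₁pos hs₁eq]
    rw [hyx, heq]
end

section
/- Let k₁, k₂ be positive integers and 0 < p < 1. Then the quantity γ = 2p(1−p)(k₁k₂ − 1)/((1−p)k₁ + p k₂ + k₁k₂) is nonnegative, and is zero iff k₁k₂ = 1. Moreover the 2×2 stochastic matrix P with rows [p(k₁−1)/k₁, p/k₁ + 1−p] and [(1−p)/k₂ + p, (1−p)(k₂−1)/k₂] has stationary distribution π, and γ = E_π of the expected length increment, computed explicitly. -/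
theorem elementary_drift_formula (k1 k2 : ℕ) (hk1 : 0 < k1) (hk2 : 0 < k2)
    (p : ℝ) (hp0 : 0 < p) (hp1 : p < 1)
    (γ : ℝ)
    (hγ : γ = 2 * p * (1 - p) * ((k1 : ℝ) * k2 - 1) /
      ((1 - p) * k1 + p * k2 + (k1 : ℝ) * k2))
    (P : Matrix (Fin 2) (Fin 2) ℝ)
    (hP : P = !![p * ((k1 : ℝ) - 1) / k1, p / k1 + (1 - p);
                 (1 - p) / k2 + p, (1 - p) * ((k2 : ℝ) - 1) / k2])
    (π : Fin 2 → ℝ)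
    (hπ : π = fun i =>
      if i = 0 then ((1 - p) / k2 + p) / (((1 - p) / k2 + p) + (p / k1 + (1 - p)))
      else (p / k1 + (1 - p)) / (((1 - p) / k2 + p) + (p / k1 + (1 - p)))) :
    (0 ≤ γ) ∧ (γ = 0 ↔ (k1 : ℝ) * k2 = 1) ∧
    (∀ i, ∑ j, P i j = 1) ∧
    Matrix.vecMul π P = π ∧
    γ = π 0 * ((1 - p) - p / k1) + π 1 * (p - (1 - p) / k2) := by
  have hk1' : (1:ℝ) ≤ (k1:ℝ) := by exact_mod_cast hk1
  have hk2' : (1:ℝ) ≤ (k2:ℝ) := by exact_mod_cast hk2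
  have hk1p : (0:ℝ) < (k1:ℝ) := by linarith
  have hk2p : (0:ℝ) < (k2:ℝ) := by linarith
  have hq : 0 < 1 - p := by linarith
  have hD : (0:ℝ) < (1 - p) * k1 + p * k2 + (k1 : ℝ) * k2 := by positivity
  have hN : (0:ℝ) ≤ (k1:ℝ) * k2 - 1 := by nlinarith
  have hS : (0:ℝ) < ((1 - p) / k2 + p) + (p / k1 + (1 - p)) := by positivity
  refine ⟨?_, ?_, ?_, ?_, ?_⟩
  · rw [hγ]; positivity
  · rw [hγ]
    rw [div_eq_zero_iff]
    constructor
    · rintro (h | h)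
      · have hpq : (0:ℝ) < 2 * p * (1 - p) := by positivity
        have h2 : (k1:ℝ) * k2 - 1 = 0 := by
          rcases mul_eq_zero.mp h with h' | h'
          · exact absurd h' (ne_of_gt hpq)
          · exact h'
        linarith
      · exact absurd h (ne_of_gt hD)
    · intro h; left; rw [h]; ring
  · intro i
    fin_cases i <;> simp [hP, Fin.sum_univ_two] <;> field_simp <;> ring
  · subst hP hπ
    funext i
    fin_cases i <;>
      simp only [Matrix.vecMul, dotProduct, Fin.sum_univ_two, Matrix.cons_val',
        Matrix.cons_val_zero, Matrix.cons_val_one, Matrix.head_cons, Matrix.empty_val',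
        Matrix.cons_val_fin_one, Matrix.head_fin_const, Fin.isValue, if_true, if_pos rfl] <;>
      norm_num <;> field_simp <;> ring
  · subst hπ
    simp only [Fin.isValue, Fin.one_eq_zero_iff, one_ne_zero, ↓reduceIte]
    rw [hγ]
    rw [div_eq_iff (ne_of_gt hD)]
    field_simp
    ring
end
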